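/- Let b be a symmetric bilinear form on a finite-dimensional real vector space V, and let u ∈ V satisfy b(u,u) = 0 and b(u,y) ≠ 0 for some y ∈ V (i.e. u ∉ rad(b)). Then the restriction of b to the hyperplane u^⊥ᵇ = {x ∈ V : b(u,x) = 0} has rank equal to rank(b) − 2. -/

import Mathlib

/-- The radical of a bilinear form, `{x | b(x,y) = 0 for all y}`, as the kernel
of `b` viewed as a map into the dual. -/
noncomputable def bilinRadical {V : Type*} [AddCommGroup V] [Module ℝ V]
    (b : V →ₗ[ℝ] V →ₗ[ℝ] ℝ) : Submodule ℝ V :=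
  LinearMap.ker b

/-- The rank of a bilinear form: `dim V − dim rad(b)`. -/
noncomputable def bilinRank (V : Type*) [AddCommGroup V] [Module ℝ V]
    (b : V →ₗ[ℝ] V →ₗ[ℝ] ℝ) : ℕ :=
  Module.finrank ℝ V - Module.finrank ℝ (bilinRadical b)

/-- If `b` is a symmetric bilinear form on a finite-dimensional
real vector space `V`, and `u ∈ V` satisfies `b(u,u) = 0` and `u ∉ rad(b)`,
then the restriction of `b` to the hyperplane `u^⊥ᵇ = {x | b(u,x) = 0}` has
rank `rank(b) − 2`. -/
theorem stmt8
    {V : Type*} [AddCommGroup V] [Module ℝ V] [FiniteDimensional ℝ V]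
    (b : V →ₗ[ℝ] V →ₗ[ℝ] ℝ)
    (hb_symm : ∀ y z : V, b y z = b z y)
    (u : V) (huu : b u u = 0) (hu : ∃ y : V, b u y ≠ 0) :
    bilinRank (LinearMap.ker (b u))
        (b.domRestrict₁₂ (LinearMap.ker (b u)) (LinearMap.ker (b u))) =
      bilinRank V b - 2 := by
  obtain ⟨y, hy⟩ := hu
  set W := LinearMap.ker (b u) with hW
  have hbu : b u ≠ 0 := fun h => hy (by simp [h])
  have hu0 : u ≠ 0 := fun h => hbu (by simp [h])
  have hdimW : Module.finrank ℝ W + 1 = Module.finrank ℝ V :=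
    Module.Dual.finrank_ker_add_one_of_ne_zero hbu
  set bW := b.domRestrict₁₂ W W with hbW
  have huW : u ∈ W := LinearMap.mem_ker.mpr huu
  have hRW : LinearMap.ker b ≤ W := by
    intro x hx
    have : b x = 0 := LinearMap.mem_ker.mp hx
    exact LinearMap.mem_ker.mpr (by rw [hb_symm u x, this]; rfl)
  have hmap : (LinearMap.ker bW).map W.subtype = LinearMap.ker b ⊔ Submodule.span ℝ {u} := by
    apply le_antisymm
    · rintro _ ⟨⟨x, hxW⟩, hx, rfl⟩
      have hx' : ∀ w : V, w ∈ W → b x w = 0 := by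
        intro w hw
        have := congrFun (congrArg (fun f => f.toFun) (LinearMap.mem_ker.mp hx)) ⟨w, hw⟩
        simpa [bW, LinearMap.domRestrict₁₂_apply] using this
      have hker : LinearMap.ker (b u) ≤ LinearMap.ker (b x) := fun w hw =>
        LinearMap.mem_ker.mpr (hx' w hw)
      have hspan : b x ∈ Submodule.span ℝ (Set.range (fun _ : Unit => b u)) := by
        apply FiniteDimensional.mem_span_of_iInf_ker_le_ker
        simpa using hker
      rw [Set.range_const, Submodule.mem_span_singleton] at hspan
      obtain ⟨c, hc⟩ := hspan
      have hxc : x - c • u ∈ LinearMap.ker b := by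
        rw [LinearMap.mem_ker]
        simp [map_sub, hc.symm]
      have hrepr : W.subtype ⟨x, hxW⟩ = (x - c • u) + c • u := by simp
      rw [hrepr]
      exact Submodule.add_mem _ (Submodule.mem_sup_left hxc)
        (Submodule.mem_sup_right (Submodule.smul_mem _ _ (Submodule.mem_span_singleton_self u)))
    · rw [sup_le_iff]
      constructor
      · intro x hx
        refine ⟨⟨x, hRW hx⟩, ?_, rfl⟩
        show _ ∈ LinearMap.ker bW
        rw [LinearMap.mem_ker]
        ext w
        rw [hbW]; simp [LinearMap.domRestrict₁₂_apply, LinearMap.mem_ker.mp hx]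
      · rw [Submodule.span_le, Set.singleton_subset_iff]
        refine ⟨⟨u, huW⟩, ?_, rfl⟩
        show _ ∈ LinearMap.ker bW
        rw [LinearMap.mem_ker]
        ext w
        have : b u (w : V) = 0 := w.2
        rw [hbW]; simp [LinearMap.domRestrict₁₂_apply, this]
  -- dimension of the sup
  have hdisj : LinearMap.ker b ⊓ Submodule.span ℝ {u} = ⊥ := by
    rw [Submodule.eq_bot_iff]
    intro x hx
    obtain ⟨hx1, hx2⟩ := Submodule.mem_inf.mp hx
    rw [Submodule.mem_span_singleton] at hx2
    obtain ⟨c, rfl⟩ := hx2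
    rcases eq_or_ne c 0 with rfl | hc
    · simp
    · exfalso
      have : u ∈ LinearMap.ker b := by
        have := (LinearMap.ker b).smul_mem c⁻¹ hx1
        rwa [smul_smul, inv_mul_cancel₀ hc, one_smul] at this
      exact hbu (LinearMap.mem_ker.mp this)
  have hsupdim : Module.finrank ℝ (LinearMap.ker b ⊔ Submodule.span ℝ {u} : Submodule ℝ V)
      = Module.finrank ℝ (LinearMap.ker b) + 1 := by
    have := Submodule.finrank_sup_add_finrank_inf_eq (LinearMap.ker b) (Submodule.span ℝ {u})
    rw [hdisj, finrank_span_singleton hu0] at this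
    simpa using this
  have hkerdim : Module.finrank ℝ (LinearMap.ker bW)
      = Module.finrank ℝ (LinearMap.ker b) + 1 := by
    rw [← Submodule.finrank_map_subtype_eq, hmap, hsupdim]
  -- sup ≤ W
  have hle : LinearMap.ker b ⊔ Submodule.span ℝ {u} ≤ W := by
    rw [sup_le_iff]
    exact ⟨hRW, by rw [Submodule.span_le, Set.singleton_subset_iff]; exact huW⟩
  have hineq : Module.finrank ℝ (LinearMap.ker b) + 1 ≤ Module.finrank ℝ W := by
    rw [← hsupdim]; exact Submodule.finrank_mono hle
  unfold bilinRank bilinRadical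
  rw [hkerdim]
  omega
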